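/- arXiv:0711.0875 — 4 statements merged into one kernel-verified Lean document; each statement's English description precedes it below -/
import Mathlib

section
/- Let σ_x = [[0,1],[1,0]] and σ_z = [[1,0],[0,−1]], let θ ∈ ℝ, and let n·σ = sin θ · σ_x + cos θ · σ_z. Let ψ ∈ ℂ² be any unit eigenvector of n·σ. Let p = (|ψ_1|², |ψ_2|²) be the measurement distribution of ψ in the σ_z eigenbasis (the standard basis) and let q be the measurement distribution of ψ in an orthonormal eigenbasis of n·σ (so q = (1,0) or (0,1)). Then R(p) + R(q) = 2 − h(cos²(θ/2)), where h(x) = −x log₂ x − (1−x) log₂(1−x) is the binary entropy; in particular R(p) + R(q) > 1 unless cos θ = 0. -/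
open scoped BigOperators

private lemma term_split (x : ℝ) (hx : 0 ≤ x) :
    x * Real.logb 2 (2 * x) = x + x * Real.logb 2 x := by
  rcases hx.eq_or_lt with h | h
  · simp [← h]
  · rw [Real.logb_mul two_ne_zero h.ne', Real.logb_self_eq_one (by norm_num : (1:ℝ) < 2)]
    ring

private lemma norm_sq_eq (co s ε : ℝ) (hpyth : s ^ 2 + co ^ 2 = 1) (hε2 : ε ^ 2 = 1)
    (ψ0 ψ1 : ℂ)
    (e0 : (co : ℂ) * ψ0 + (s : ℂ) * ψ1 = (ε : ℂ) * ψ0)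
    (e1 : (s : ℂ) * ψ0 - (co : ℂ) * ψ1 = (ε : ℂ) * ψ1)
    (hunit : ‖ψ0‖ ^ 2 + ‖ψ1‖ ^ 2 = 1) :
    ‖ψ0‖ ^ 2 = (1 + ε * co) / 2 := by
  set n : ℝ := ‖ψ0‖ ^ 2 with hn
  have hb : ‖ψ1‖ ^ 2 = 1 - n := by linarith
  have h1 : (s : ℂ) * ψ1 = ((ε - co : ℝ) : ℂ) * ψ0 := by push_cast; linear_combination e0
  have h2 : (s : ℂ) * ψ0 = ((ε + co : ℝ) : ℂ) * ψ1 := by push_cast; linear_combination e1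
  have A : s ^ 2 * (1 - n) = (ε - co) ^ 2 * n := by
    have h := congrArg (fun z => ‖z‖ ^ 2) h1
    simp only [norm_mul, mul_pow, Complex.norm_real, Complex.norm_ofNat, sq_abs] at h
    rw [← hn] at h
    rw [← hb]
    convert h using 2 <;> simp [Complex.norm_real, sq_abs]
  have B : s ^ 2 * n = (ε + co) ^ 2 * (1 - n) := by
    have h := congrArg (fun z => ‖z‖ ^ 2) h2
    simp only [norm_mul, mul_pow, Complex.norm_real, Complex.norm_ofNat, sq_abs] at h
    rw [← hn, hb] at h
    convert h using 2 <;> simp [Complex.norm_real, sq_abs]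
  have h4 : 4 * n = 2 + 2 * ε * co := by
    linear_combination B - A - (2 * n - 1) * hpyth - (2 * n - 1) * hε2
  linarith

/-- For a unit eigenvector ψ of `n·σ = sin θ σ_x + cos θ σ_z`,
with `p` the measurement distribution of ψ in the standard (σ_z) basis and `q` its
distribution in an orthonormal eigenbasis of `n·σ` (so `q = (1,0)` or `(0,1)`),
one has `R(p) + R(q) = 2 − h(cos²(θ/2))`; in particular `R(p) + R(q) > 1` unless
`cos θ = 0`. -/
theorem stmt_5 (θ : ℝ)
    (σx σz : Matrix (Fin 2) (Fin 2) ℂ)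
    (hσx : σx = !![0, 1; 1, 0]) (hσz : σz = !![1, 0; 0, -1])
    (ψ : Fin 2 → ℂ) (hunit : ‖ψ 0‖ ^ 2 + ‖ψ 1‖ ^ 2 = 1)
    (hev : ∃ c : ℂ,
      Matrix.mulVec ((Real.sin θ : ℂ) • σx + (Real.cos θ : ℂ) • σz) ψ = c • ψ)
    (p q : Fin 2 → ℝ)
    (hp : p = ![‖ψ 0‖ ^ 2, ‖ψ 1‖ ^ 2])
    (hq : q = ![1, 0] ∨ q = ![0, 1]) :
    ((∑ j, p j * Real.logb 2 (2 * p j)) + (∑ k, q k * Real.logb 2 (2 * q k))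
        = 2 - (-(Real.cos (θ / 2) ^ 2 * Real.logb 2 (Real.cos (θ / 2) ^ 2))
            - (1 - Real.cos (θ / 2) ^ 2) * Real.logb 2 (1 - Real.cos (θ / 2) ^ 2)))
    ∧ (Real.cos θ ≠ 0 →
        1 < (∑ j, p j * Real.logb 2 (2 * p j))
            + (∑ k, q k * Real.logb 2 (2 * q k))) := by
  obtain ⟨c, hc⟩ := hev
  subst hσx hσz
  set s : ℝ := Real.sin θ
  set co : ℝ := Real.cos θ
  have hpyth : s ^ 2 + co ^ 2 = 1 := Real.sin_sq_add_cos_sq θ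
  have e0 : (co : ℂ) * ψ 0 + (s : ℂ) * ψ 1 = c * ψ 0 := by
    have := congrFun hc 0
    simpa [Matrix.mulVec, dotProduct, Fin.sum_univ_two] using this
  have e1 : (s : ℂ) * ψ 0 - (co : ℂ) * ψ 1 = c * ψ 1 := by
    have := congrFun hc 1
    have h := this
    simp [Matrix.mulVec, dotProduct, Fin.sum_univ_two] at h
    linear_combination h
  have hpythC : (s : ℂ) ^ 2 + (co : ℂ) ^ 2 = 1 := by exact_mod_cast congrArg (Complex.ofReal) hpyth
  -- c² ψ = ψ
  have hc0 : c ^ 2 * ψ 0 = ψ 0 := by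
    linear_combination (ψ 0) * hpythC - ((co : ℂ) + c) * e0 - (s : ℂ) * e1
  have hc1 : c ^ 2 * ψ 1 = ψ 1 := by
    linear_combination (ψ 1) * hpythC - (s : ℂ) * e0 + ((co : ℂ) - c) * e1
  have hψne : ψ 0 ≠ 0 ∨ ψ 1 ≠ 0 := by
    by_contra h
    push_neg at h
    rw [h.1, h.2] at hunit
    simp at hunit
  have hc2 : c ^ 2 = 1 := by
    rcases hψne with h | h
    · exact mul_right_cancel₀ h (hc0.trans (one_mul _).symm)
    · exact mul_right_cancel₀ h (hc1.trans (one_mul _).symm)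
  have hcpm : c = 1 ∨ c = -1 := by
    have : (c - 1) * (c + 1) = 0 := by linear_combination hc2
    rcases mul_eq_zero.mp this with h | h
    · left; linear_combination h
    · right; linear_combination h
  -- derive ‖ψ 0‖² = (1 + ε co)/2
  have key : ‖ψ 0‖ ^ 2 = (1 + co) / 2 ∨ ‖ψ 0‖ ^ 2 = (1 - co) / 2 := by
    rcases hcpm with h | h
    · left
      have := norm_sq_eq co s 1 hpyth (by norm_num) (ψ 0) (ψ 1)
        (by push_cast; rw [h] at e0; linear_combination e0)
        (by push_cast; rw [h] at e1; linear_combination e1) hunit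
      linarith
    · right
      have := norm_sq_eq co s (-1) hpyth (by norm_num) (ψ 0) (ψ 1)
        (by push_cast; rw [h] at e0; linear_combination e0)
        (by push_cast; rw [h] at e1; linear_combination e1) hunit
      linarith
  set C : ℝ := Real.cos (θ / 2) ^ 2 with hC
  have hCval : C = (1 + co) / 2 := by
    rw [hC, Real.cos_sq]
    rw [show 2 * (θ / 2) = θ by ring]
    ring
  have hC0 : 0 ≤ C := sq_nonneg _
  have hC1 : C ≤ 1 := by
    have := Real.neg_one_le_cos θ
    have := Real.cos_le_one θ
    linarith [hCval]
  set a : ℝ := ‖ψ 0‖ ^ 2 with ha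
  have ha0 : 0 ≤ a := sq_nonneg _
  have ha1 : a ≤ 1 := by nlinarith [sq_nonneg ‖ψ 1‖]
  have hb : ‖ψ 1‖ ^ 2 = 1 - a := by linarith
  have haC : a = C ∨ a = 1 - C := by
    rcases key with h | h
    · left; rw [hCval]; linarith
    · right; rw [hCval]; linarith
  -- q-sum equals 1
  have hqsum : (∑ k, q k * Real.logb 2 (2 * q k)) = 1 := by
    rcases hq with h | h <;>
    · subst h
      simp [Fin.sum_univ_two, Real.logb_self_eq_one]
  -- p-sum
  have hpsum : (∑ j, p j * Real.logb 2 (2 * p j))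
      = 2 + a * Real.logb 2 a + (1 - a) * Real.logb 2 (1 - a) - 1 := by
    rw [hp]
    simp only [Fin.sum_univ_two, Matrix.cons_val_zero, Matrix.cons_val_one, Matrix.head_cons]
    rw [hb, term_split a ha0, term_split (1 - a) (by linarith)]
    ring
  have hEq : (∑ j, p j * Real.logb 2 (2 * p j)) + (∑ k, q k * Real.logb 2 (2 * q k))
      = 2 - (-(C * Real.logb 2 C) - (1 - C) * Real.logb 2 (1 - C)) := by
    rw [hqsum, hpsum]
    rcases haC with h | h
    · rw [h]; ring
    · rw [h, show (1:ℝ) - (1 - C) = C from by ring]; ring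
  refine ⟨hEq, fun hco => ?_⟩
  rw [hEq]
  have hCne : C ≠ 2⁻¹ := by
    rw [hCval]
    intro h
    apply hco
    field_simp at h
    linarith
  have hbin : Real.binEntropy C < Real.log 2 := Real.binEntropy_lt_log_two.mpr hCne
  have hbinEq : -(C * Real.logb 2 C) - (1 - C) * Real.logb 2 (1 - C)
      = Real.binEntropy C / Real.log 2 := by
    rw [Real.binEntropy, Real.log_inv, Real.log_inv, Real.logb, Real.logb]
    field_simp
    ring
  rw [hbinEq]
  have hlog2 : (0:ℝ) < Real.log 2 := Real.log_pos (by norm_num)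
  have : Real.binEntropy C / Real.log 2 < 1 := (div_lt_one hlog2).mpr hbin
  linarith
end

section
/- Let ρ be a 2×2 density matrix (Hermitian, positive semidefinite, trace 1) and define its phase distribution P(φ) = (1/(2π)) ∫₀^π sin θ · ⟨v(θ,φ), ρ v(θ,φ)⟩ dθ, where v(θ,φ) = (sin(θ/2) e^{−iφ}, cos(θ/2)) ∈ ℂ². Then P(φ) = (1/(2π)) [ 1 + (π/2) Re( ρ_{12} e^{iφ} ) ] for all φ, and P is constant in φ (equal to 1/(2π)) if and only if ρ_{12} = 0, i.e. if and only if ρ is diagonal in the standard (Wigner–Dicke) basis. -/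
open scoped ComplexOrder

/-- For a 2×2 density matrix ρ, its phase distribution
`P(φ) = (1/(2π)) ∫₀^π sin θ ⟨v(θ,φ), ρ v(θ,φ)⟩ dθ`, where
`v(θ,φ) = (sin(θ/2) e^{−iφ}, cos(θ/2))`, satisfies
`P(φ) = (1/(2π))[1 + (π/2) Re(ρ₁₂ e^{iφ})]` for all φ, and `P` is constant
(equal to `1/(2π)`) iff `ρ₁₂ = 0`, i.e. iff ρ is diagonal in the
Wigner–Dicke basis. -/
theorem stmt_9 (ρ : Matrix (Fin 2) (Fin 2) ℂ)
    (hherm : ρ.IsHermitian) (hpsd : ρ.PosSemidef) (htr : ρ.trace = 1)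
    (v : ℝ → ℝ → Fin 2 → ℂ)
    (hv : ∀ θ φ, v θ φ =
      ![(Real.sin (θ / 2) : ℂ) * Complex.exp (-Complex.I * φ),
        (Real.cos (θ / 2) : ℂ)])
    (P : ℝ → ℝ)
    (hP : ∀ φ, P φ = (1 / (2 * Real.pi)) *
      ∫ θ in (0 : ℝ)..Real.pi,
        Real.sin θ * (dotProduct (star (v θ φ)) (ρ.mulVec (v θ φ))).re) :
    (∀ φ, P φ = (1 / (2 * Real.pi)) *
        (1 + (Real.pi / 2) * (ρ 0 1 * Complex.exp (Complex.I * φ)).re))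
    ∧ ((∀ φ, P φ = 1 / (2 * Real.pi)) ↔ ρ 0 1 = 0) := by
  set A := (ρ 0 0).re with hA
  set D := (ρ 1 1).re with hD
  have h10 : ρ 1 0 = starRingEnd ℂ (ρ 0 1) := by
    conv_lhs => rw [← hherm.eq]
    simp [Matrix.conjTranspose_apply]
  have hAD : A + D = 1 := by
    have h : ρ 0 0 + ρ 1 1 = 1 := by
      simpa [Matrix.trace, Fin.sum_univ_two] using htr
    have := congrArg Complex.re h
    simpa using this
  -- the real part of the quadratic form
  have key : ∀ θ φ : ℝ,
      (dotProduct (star (v θ φ)) (ρ.mulVec (v θ φ))).re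
      = Real.sin (θ/2)^2 * A + Real.cos (θ/2)^2 * D
        + 2 * Real.sin (θ/2) * Real.cos (θ/2) * (ρ 0 1 * Complex.exp (Complex.I * φ)).re := by
    intro θ φ
    rw [hv]
    simp only [dotProduct, Matrix.mulVec, Fin.sum_univ_two, h10,
      Matrix.cons_val_zero, Matrix.cons_val_one, Matrix.head_cons, Pi.star_apply,
      Matrix.cons_val', Matrix.empty_val', Matrix.cons_val_fin_one, Matrix.head_fin_const,
      Complex.mul_re, Complex.mul_im, Complex.add_re, Complex.add_im,
      Complex.exp_re, Complex.exp_im, Complex.neg_re, Complex.neg_im,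
      Complex.I_re, Complex.I_im, Complex.ofReal_re, Complex.ofReal_im,
      Complex.conj_re, Complex.conj_im, RCLike.star_def]
    simp [Complex.mul_re, Complex.mul_im, Real.cos_neg, Real.sin_neg]
    linear_combination Real.sin (θ/2)^2 * A * Real.sin_sq_add_cos_sq φ
  -- compute the integral for each fixed K
  have hint : ∀ K : ℝ, (∫ θ in (0:ℝ)..Real.pi,
      A * (Real.sin θ/2 - Real.cos θ*Real.sin θ/2)
      + D * (Real.sin θ/2 + Real.cos θ*Real.sin θ/2)
      + K * (1/2 - Real.cos (2*θ)/2)) = 1 + Real.pi/2 * K := by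
    intro K
    set f : ℝ → ℝ := fun θ => A * (Real.sin θ/2 - Real.cos θ*Real.sin θ/2)
      + D * (Real.sin θ/2 + Real.cos θ*Real.sin θ/2) + K * (1/2 - Real.cos (2*θ)/2) with hf
    set F : ℝ → ℝ := fun θ => A * (-Real.cos θ/2 + Real.cos θ^2/4)
      + D * (-Real.cos θ/2 - Real.cos θ^2/4) + K * (θ/2 - Real.sin (2*θ)/4) with hF
    have hderiv : ∀ x ∈ Set.uIcc (0:ℝ) Real.pi, HasDerivAt F (f x) x := by
      intro x _
      have c1 : HasDerivAt Real.cos (-Real.sin x) x := Real.hasDerivAt_cos x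
      have c2 : HasDerivAt (fun y : ℝ => Real.cos y ^ 2) (2 * Real.cos x * (-Real.sin x)) x := by
        simpa [mul_comm, mul_assoc] using c1.fun_pow 2
      have c3 : HasDerivAt (fun y : ℝ => Real.sin (2*y)) (Real.cos (2*x) * 2) x := by
        have := (Real.hasDerivAt_sin (2*x)).comp x ((hasDerivAt_id x).const_mul 2)
        simpa [Function.comp_def] using this
      have hid : HasDerivAt (fun y : ℝ => y) 1 x := hasDerivAt_id x
      have := ((((c1.neg.div_const 2).add (c2.div_const 4)).const_mul A).add
        (((c1.neg.div_const 2).sub (c2.div_const 4)).const_mul D)).add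
        (((hid.div_const 2).sub (c3.div_const 4)).const_mul K)
      refine (this.congr_deriv ?_).congr_of_eventuallyEq (Filter.Eventually.of_forall fun y => ?_)
      · simp only [hf]
        ring
      · simp only [hF, Pi.add_apply, Pi.sub_apply, Pi.neg_apply]
    have hcont : IntervalIntegrable f MeasureTheory.volume 0 Real.pi := by
      apply Continuous.intervalIntegrable
      fun_prop
    rw [intervalIntegral.integral_eq_sub_of_hasDerivAt hderiv hcont]
    simp [hF, Real.cos_pi, Real.sin_pi]
    linarith [hAD]
  -- the integrand equals the nice function
  have hmain : ∀ φ, P φ = (1 / (2 * Real.pi)) *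
      (1 + (Real.pi / 2) * (ρ 0 1 * Complex.exp (Complex.I * φ)).re) := by
    intro φ
    set K := (ρ 0 1 * Complex.exp (Complex.I * φ)).re with hK
    rw [hP φ]
    congr 1
    rw [← hint K]
    apply intervalIntegral.integral_congr
    intro θ _
    dsimp only
    rw [key θ φ, ← hK]
    have h1 : Real.sin θ = 2 * Real.sin (θ/2) * Real.cos (θ/2) := by
      have := Real.sin_two_mul (θ/2)
      rw [show 2*(θ/2) = θ by ring] at this
      linarith
    have hc2 : Real.cos θ = 2 * Real.cos (θ/2)^2 - 1 := by
      have := Real.cos_two_mul (θ/2)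
      rw [show 2*(θ/2) = θ by ring] at this
      linarith
    have hsc := Real.sin_sq_add_cos_sq (θ/2)
    have h2 : Real.sin (θ/2)^2 = (1 - Real.cos θ)/2 := by linarith
    have h3 : Real.cos (θ/2)^2 = (1 + Real.cos θ)/2 := by linarith
    have h4 : Real.cos (2*θ) = 1 - 2 * Real.sin θ^2 := by
      rw [Real.cos_two_mul]
      nlinarith [Real.sin_sq_add_cos_sq θ]
    linear_combination A * Real.sin θ * h2 + D * Real.sin θ * h3
      - K * Real.sin θ * h1 + K/2 * h4
  refine ⟨hmain, ?_, ?_⟩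
  · intro hc
    have hπ : Real.pi ≠ 0 := Real.pi_ne_zero
    have hz : ∀ φ : ℝ, (ρ 0 1 * Complex.exp (Complex.I * φ)).re = 0 := by
      intro φ
      have h2 : (1:ℝ) / (2 * Real.pi) ≠ 0 := by positivity
      have h3 : 1 + Real.pi / 2 * (ρ 0 1 * Complex.exp (Complex.I * φ)).re = 1 :=
        mul_left_cancel₀ h2 (by rw [mul_one]; exact (hmain φ).symm.trans (hc φ))
      have h4 : Real.pi / 2 * (ρ 0 1 * Complex.exp (Complex.I * φ)).re = 0 := by linarith
      exact (mul_eq_zero.1 h4).resolve_left (by positivity)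
    have e0 := hz 0
    have e1 := hz (Real.pi/2)
    simp [Complex.mul_re, Complex.exp_re, Complex.exp_im] at e0 e1
    apply Complex.ext <;> simp [e0, e1]
  · intro h0 φ
    rw [hmain φ, h0]
    simp
end

section
/- Let α′ ∈ [0,π] and β′ ∈ [0,2π], and let ψ = v(α′,β′) = (sin(α′/2) e^{−iβ′}, cos(α′/2)) ∈ ℂ² be the spin-1/2 atomic coherent state. Then its phase distribution satisfies, for every φ, (1/(2π)) ∫₀^π sin θ · |⟨v(θ,φ), ψ⟩|² dθ = (1/(2π)) [ 1 + (π/4) sin(α′) cos(β′ − φ) ]. -/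
lemma norm_sq_aux (a b ξ : ℝ) :
    ‖(a : ℂ) * Complex.exp (Complex.I * ξ) + (b : ℂ)‖ ^ 2
      = a ^ 2 + b ^ 2 + 2 * a * b * Real.cos ξ := by
  have h : (a : ℂ) * Complex.exp (Complex.I * ξ) + (b : ℂ)
      = ⟨a * Real.cos ξ + b, a * Real.sin ξ⟩ := by
    rw [mul_comm Complex.I, Complex.exp_mul_I]
    apply Complex.ext <;> simp [Complex.cos_ofReal_re, Complex.sin_ofReal_re]
  rw [h, Complex.sq_norm, Complex.normSq_mk]
  nlinarith [Real.sin_sq_add_cos_sq ξ]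

lemma integral_aux (A B C : ℝ) :
    ∫ θ in (0:ℝ)..Real.pi,
        (A * (Real.sin θ * (1 - Real.cos θ) / 2)
          + B * (Real.sin θ * (1 + Real.cos θ) / 2)
          + C * Real.sin θ ^ 2)
      = A + B + C * Real.pi / 2 := by
  have h : ∀ θ ∈ Set.uIcc (0:ℝ) Real.pi,
      HasDerivAt (fun θ : ℝ => A * (-Real.cos θ + Real.cos θ ^ 2 / 2) / 2
          + B * (-Real.cos θ - Real.cos θ ^ 2 / 2) / 2
          + C * (θ - Real.sin θ * Real.cos θ) / 2)
        (A * (Real.sin θ * (1 - Real.cos θ) / 2)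
          + B * (Real.sin θ * (1 + Real.cos θ) / 2)
          + C * Real.sin θ ^ 2) θ := by
    intro θ _
    have hs := Real.hasDerivAt_sin θ
    have hc := Real.hasDerivAt_cos θ
    have h1 := (((hc.neg.add ((hc.pow 2).div_const 2)).const_mul A).div_const 2).add
          (((hc.neg.sub ((hc.pow 2).div_const 2)).const_mul B).div_const 2) |>.add
          ((((hasDerivAt_id θ).sub (hs.mul hc)).const_mul C).div_const 2)
    refine h1.congr_deriv (Eq.symm ?_)
    have hpc := Real.sin_sq_add_cos_sq θ
    push_cast
    linear_combination (C/2) * hpc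
  rw [intervalIntegral.integral_eq_sub_of_hasDerivAt h
    (by apply Continuous.intervalIntegrable; continuity)]
  simp [Real.cos_pi, Real.sin_pi]
  ring

/-- The phase distribution of the spin-1/2 atomic coherent state
`ψ = v(α′,β′) = (sin(α′/2) e^{−iβ′}, cos(α′/2))` is
`P(φ) = (1/(2π))[1 + (π/4) sin α′ cos(β′ − φ)]`. -/
theorem stmt_11 (α' β' : ℝ) (hα' : α' ∈ Set.Icc (0 : ℝ) Real.pi)
    (hβ' : β' ∈ Set.Icc (0 : ℝ) (2 * Real.pi))
    (v : ℝ → ℝ → Fin 2 → ℂ)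
    (hv : ∀ θ φ, v θ φ =
      ![(Real.sin (θ / 2) : ℂ) * Complex.exp (-Complex.I * φ),
        (Real.cos (θ / 2) : ℂ)])
    (ψ : Fin 2 → ℂ) (hψ : ψ = v α' β') :
    ∀ φ : ℝ,
      (1 / (2 * Real.pi)) *
          ∫ θ in (0 : ℝ)..Real.pi,
            Real.sin θ * ‖dotProduct (star (v θ φ)) ψ‖ ^ 2
        = (1 / (2 * Real.pi)) *
            (1 + (Real.pi / 4) * Real.sin α' * Real.cos (β' - φ)) := by
  intro φ
  subst hψ
  set t := Real.sin (α' / 2) with ht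
  set d := Real.cos (α' / 2) with hd
  set C := t * d * Real.cos (φ - β') with hC
  have hz : ∀ θ : ℝ, dotProduct (star (v θ φ)) (v α' β')
      = ((Real.sin (θ/2) * t : ℝ) : ℂ) * Complex.exp (Complex.I * ((φ - β' : ℝ) : ℂ))
        + ((Real.cos (θ/2) * d : ℝ) : ℂ) := by
    intro θ
    simp only [hv, dotProduct, Fin.sum_univ_two, Pi.star_apply, Matrix.cons_val_zero,
      Matrix.cons_val_one, Matrix.head_cons, star_mul', Complex.star_def, ← Complex.exp_conj,
      map_mul, map_neg, Complex.conj_I, Complex.conj_ofReal]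
    rw [Complex.ofReal_mul, Complex.ofReal_mul]
    rw [show Complex.I * ((φ - β' : ℝ) : ℂ) = (- -Complex.I * φ) + (-Complex.I * β') by
        push_cast; ring,
      Complex.exp_add]
    ring
  have key : Set.EqOn
      (fun θ : ℝ => Real.sin θ * ‖dotProduct (star (v θ φ)) (v α' β')‖ ^ 2)
      (fun θ : ℝ => t ^ 2 * (Real.sin θ * (1 - Real.cos θ) / 2)
          + d ^ 2 * (Real.sin θ * (1 + Real.cos θ) / 2)
          + C * Real.sin θ ^ 2)
      (Set.uIcc (0:ℝ) Real.pi) := by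
    intro θ _
    simp only
    rw [hz θ, norm_sq_aux]
    have hc2 := Real.cos_two_mul (θ/2)
    rw [show 2 * (θ/2) = θ by ring] at hc2
    have hpc2 := Real.sin_sq_add_cos_sq (θ/2)
    have h2 : Real.cos (θ/2) ^ 2 = (1 + Real.cos θ) / 2 := by linarith
    have h1 : Real.sin (θ/2) ^ 2 = (1 - Real.cos θ) / 2 := by linarith
    have h3 : Real.sin θ = 2 * Real.sin (θ/2) * Real.cos (θ/2) := by
      have := Real.sin_two_mul (θ/2)
      rw [show 2 * (θ/2) = θ by ring] at this
      exact this
    rw [hC]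
    linear_combination (Real.sin θ * t^2) * h1 + (Real.sin θ * d^2) * h2
      - (t * d * Real.cos (φ - β') * Real.sin θ) * h3
  rw [intervalIntegral.integral_congr key, integral_aux]
  have hpc := Real.sin_sq_add_cos_sq (α'/2)
  have hsin : Real.sin α' = 2 * t * d := by
    have := Real.sin_two_mul (α'/2)
    rw [show 2 * (α'/2) = α' by ring] at this
    rw [ht, hd]; exact this
  have hcos : Real.cos (β' - φ) = Real.cos (φ - β') := by
    rw [show β' - φ = -(φ - β') by ring, Real.cos_neg]
  rw [← ht, ← hd] at hpc
  rw [hC, hcos, hsin]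
  linear_combination (1 / (2 * Real.pi)) * hpc
end

section
/- The phase knowledge of a distribution of the form (1/(2π))(1 + s cos φ) is monotone in the modulation amplitude: for all real s, s′ with 0 ≤ s ≤ s′ ≤ 1, ∫₀^{2π} (1 + s cos φ) log₂(1 + s cos φ) dφ ≤ ∫₀^{2π} (1 + s′ cos φ) log₂(1 + s′ cos φ) dφ, with the convention 0·log₂ 0 = 0. Consequently, among the qubit atomic coherent states |α′,β′⟩, whose phase distribution is (1/(2π))[1 + (π/4) sin α′ cos(β′−φ)], the phase knowledge R_φ is maximal at α′ = π/2 (the equatorial states) and minimal (equal to 0) at α′ = 0 and α′ = π. -/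
open Real intervalIntegral

noncomputable def Gfun : ℝ → ℝ := fun x => x * Real.logb 2 x

lemma Gfun_cont : Continuous Gfun := by
  have : Gfun = fun x => (x * Real.log x) * (Real.log 2)⁻¹ := by
    funext x; simp [Gfun, Real.logb, div_eq_mul_inv, mul_assoc]
  rw [this]
  exact Real.continuous_mul_log.mul continuous_const

lemma Gfun_convex : ConvexOn ℝ (Set.Ici (0:ℝ)) Gfun := by
  have h := Real.convexOn_mul_log.smul (le_of_lt (inv_pos.mpr (Real.log_pos one_lt_two)))
  have : Gfun = (Real.log 2)⁻¹ • (fun x => x * Real.log x) := by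
    funext x; simp [Gfun, Real.logb, div_eq_mul_inv, smul_eq_mul]; ring
  rw [this]; exact h

lemma cont_int (s : ℝ) : Continuous fun φ => Gfun (1 + s * Real.cos φ) :=
  Gfun_cont.comp (continuous_const.add (continuous_const.mul Real.continuous_cos))

lemma periodic_int (s : ℝ) : Function.Periodic (fun φ => Gfun (1 + s * Real.cos φ)) (2 * Real.pi) := by
  intro x; simp [Real.cos_add_two_pi]

/-- symmetry: integral with -s equals integral with s -/
lemma sym_int (s : ℝ) :
    (∫ φ in (0:ℝ)..(2*Real.pi), Gfun (1 + (-s) * Real.cos φ))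
      = ∫ φ in (0:ℝ)..(2*Real.pi), Gfun (1 + s * Real.cos φ) := by
  have h1 : ∀ φ : ℝ, Gfun (1 + (-s) * Real.cos φ) = Gfun (1 + s * Real.cos (φ + Real.pi)) := by
    intro φ; rw [Real.cos_add_pi]; ring_nf
  simp_rw [h1]
  rw [intervalIntegral.integral_comp_add_right (fun u => Gfun (1 + s * Real.cos u)) Real.pi]
  have := (periodic_int s).intervalIntegral_add_eq Real.pi 0
  simpa [add_comm] using this

/-- shift invariance -/
lemma shift_int (s β' : ℝ) :
    (∫ φ in (0:ℝ)..(2*Real.pi), Gfun (1 + s * Real.cos (β' - φ)))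
      = ∫ φ in (0:ℝ)..(2*Real.pi), Gfun (1 + s * Real.cos φ) := by
  have h1 : ∀ φ : ℝ, Gfun (1 + s * Real.cos (β' - φ)) = Gfun (1 + s * Real.cos (φ - β')) := by
    intro φ; rw [show β' - φ = -(φ - β') by ring, Real.cos_neg]
  simp_rw [h1]
  rw [intervalIntegral.integral_comp_sub_right (fun u => Gfun (1 + s * Real.cos u)) β',
    show (2*Real.pi - β') = -β' + 2*Real.pi by ring, show (0 - β') = -β' by ring]
  simpa using (periodic_int s).intervalIntegral_add_eq (-β') 0

lemma mono_int : ∀ s s' : ℝ, 0 ≤ s → s ≤ s' → s' ≤ 1 →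
    (∫ φ in (0:ℝ)..(2*Real.pi), Gfun (1 + s * Real.cos φ))
      ≤ ∫ φ in (0:ℝ)..(2*Real.pi), Gfun (1 + s' * Real.cos φ) := by
  intro s s' hs hss' hs1
  rcases eq_or_lt_of_le (hs.trans hss') with h0 | h0
  · rw [show s = s' from le_antisymm hss' (h0 ▸ hs)]
  · -- s' > 0
    set a : ℝ := (s' + s) / (2 * s') with ha_def
    set b : ℝ := (s' - s) / (2 * s') with hb_def
    have ha : 0 ≤ a := by positivity
    have hb : 0 ≤ b := by
      apply div_nonneg (by linarith) (by linarith)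
    have hab : a + b = 1 := by
      rw [ha_def, hb_def, ← add_div, div_eq_one_iff_eq (ne_of_gt (by linarith))]; ring
    have key : ∀ φ : ℝ, Gfun (1 + s * Real.cos φ)
        ≤ a * Gfun (1 + s' * Real.cos φ) + b * Gfun (1 + (-s') * Real.cos φ) := by
      intro φ
      have hc1 : |Real.cos φ| ≤ 1 := Real.abs_cos_le_one φ
      have hc : -1 ≤ Real.cos φ := neg_le_of_abs_le hc1
      have hc' : Real.cos φ ≤ 1 := le_of_abs_le hc1
      have hx : (1 + s' * Real.cos φ) ∈ Set.Ici (0:ℝ) := by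
        simp only [Set.mem_Ici]; nlinarith
      have hy : (1 + (-s') * Real.cos φ) ∈ Set.Ici (0:ℝ) := by
        simp only [Set.mem_Ici]; nlinarith
      have := Gfun_convex.2 hx hy ha hb hab
      have hcomb : a • (1 + s' * Real.cos φ) + b • (1 + (-s') * Real.cos φ)
          = 1 + s * Real.cos φ := by
        simp only [smul_eq_mul, ha_def, hb_def]
        field_simp
        ring
      rw [hcomb] at this
      simpa [smul_eq_mul] using this
    have hi1 : IntervalIntegrable (fun φ => Gfun (1 + s * Real.cos φ)) MeasureTheory.volume 0 (2*Real.pi) :=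
      (cont_int s).intervalIntegrable _ _
    have hi2 : IntervalIntegrable (fun φ => a * Gfun (1 + s' * Real.cos φ) + b * Gfun (1 + (-s') * Real.cos φ)) MeasureTheory.volume 0 (2*Real.pi) :=
      ((continuous_const.mul (cont_int s')).add (continuous_const.mul (cont_int (-s')))).intervalIntegrable _ _
    have hmono := intervalIntegral.integral_mono_on (by positivity : (0:ℝ) ≤ 2*Real.pi) hi1 hi2 (fun φ _ => key φ)
    calc (∫ φ in (0:ℝ)..(2*Real.pi), Gfun (1 + s * Real.cos φ))
        ≤ ∫ φ in (0:ℝ)..(2*Real.pi), (a * Gfun (1 + s' * Real.cos φ) + b * Gfun (1 + (-s') * Real.cos φ)) := hmono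
      _ = a * (∫ φ in (0:ℝ)..(2*Real.pi), Gfun (1 + s' * Real.cos φ))
            + b * (∫ φ in (0:ℝ)..(2*Real.pi), Gfun (1 + (-s') * Real.cos φ)) := by
          rw [intervalIntegral.integral_add (f := fun φ => a * Gfun (1 + s' * Real.cos φ))
            (g := fun φ => b * Gfun (1 + (-s') * Real.cos φ)) ((continuous_const.mul (cont_int s')).intervalIntegrable _ _)
            ((continuous_const.mul (cont_int (-s'))).intervalIntegrable _ _),
            intervalIntegral.integral_const_mul, intervalIntegral.integral_const_mul]
      _ = ∫ φ in (0:ℝ)..(2*Real.pi), Gfun (1 + s' * Real.cos φ) := by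
          rw [sym_int s', ← add_mul, hab, one_mul]

lemma zero_int : (∫ φ in (0:ℝ)..(2*Real.pi), Gfun (1 + 0 * Real.cos φ)) = 0 := by
  simp [Gfun]

/-- The phase knowledge of `(1/(2π))(1 + s cos φ)` is monotone
in the modulation amplitude `s ∈ [0,1]`; consequently among the qubit atomic
coherent states `|α′,β′⟩`, whose phase distribution is
`(1/(2π))[1 + (π/4) sin α′ cos(β′−φ)]`, the phase knowledge `R_φ` is maximal at
`α′ = π/2` and minimal (equal to 0) at `α′ = 0` and `α′ = π`. -/
theorem stmt_13
    (Rφ : ℝ → ℝ → ℝ)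
    (hR : ∀ α' β', Rφ α' β' = (1 / (2 * Real.pi)) *
      ∫ φ in (0 : ℝ)..(2 * Real.pi),
        (1 + (Real.pi / 4) * Real.sin α' * Real.cos (β' - φ)) *
          Real.logb 2 (1 + (Real.pi / 4) * Real.sin α' * Real.cos (β' - φ))) :
    (∀ s s' : ℝ, 0 ≤ s → s ≤ s' → s' ≤ 1 →
      (∫ φ in (0 : ℝ)..(2 * Real.pi),
          (1 + s * Real.cos φ) * Real.logb 2 (1 + s * Real.cos φ))
        ≤ ∫ φ in (0 : ℝ)..(2 * Real.pi),
            (1 + s' * Real.cos φ) * Real.logb 2 (1 + s' * Real.cos φ))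
    ∧ (∀ α' β', α' ∈ Set.Icc (0 : ℝ) Real.pi → Rφ α' β' ≤ Rφ (Real.pi / 2) β')
    ∧ (∀ α' β', α' ∈ Set.Icc (0 : ℝ) Real.pi → 0 ≤ Rφ α' β')
    ∧ (∀ β', Rφ 0 β' = 0 ∧ Rφ Real.pi β' = 0) := by
  have hRG : ∀ α' β', Rφ α' β' = (1 / (2 * Real.pi)) *
      ∫ φ in (0:ℝ)..(2*Real.pi), Gfun (1 + (Real.pi / 4) * Real.sin α' * Real.cos φ) := by
    intro α' β'
    rw [hR α' β', ← shift_int ((Real.pi / 4) * Real.sin α') β']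
    rfl
  have hpi : (0:ℝ) < Real.pi := Real.pi_pos
  have hnn : (0:ℝ) ≤ 1 / (2 * Real.pi) := by positivity
  have hsle : ∀ α', α' ∈ Set.Icc (0:ℝ) Real.pi →
      0 ≤ (Real.pi / 4) * Real.sin α' ∧ (Real.pi / 4) * Real.sin α' ≤ Real.pi / 4 := by
    intro α' hα
    have hsin : 0 ≤ Real.sin α' := Real.sin_nonneg_of_nonneg_of_le_pi hα.1 hα.2
    constructor
    · positivity
    · nlinarith [Real.sin_le_one α']
  have hple1 : Real.pi / 4 ≤ 1 := by nlinarith [Real.pi_lt_d2]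
  refine ⟨fun s s' hs hss' hs1 => mono_int s s' hs hss' hs1, ?_, ?_, ?_⟩
  · intro α' β' hα
    rw [hRG α' β', hRG (Real.pi/2) β', Real.sin_pi_div_two, mul_one]
    obtain ⟨h1, h2⟩ := hsle α' hα
    exact mul_le_mul_of_nonneg_left (mono_int _ _ h1 h2 hple1) hnn
  · intro α' β' hα
    rw [hRG α' β']
    obtain ⟨h1, h2⟩ := hsle α' hα
    have := mono_int 0 ((Real.pi / 4) * Real.sin α') le_rfl h1 (h2.trans hple1)
    rw [zero_int] at this
    exact mul_nonneg hnn this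
  · intro β'
    constructor <;>
      [rw [hRG 0 β', Real.sin_zero]; rw [hRG Real.pi β', Real.sin_pi]] <;>
      simp [Gfun]
end
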